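/- Let b ≥ 2, α ∈ ℝ, and g(n) = e(α·s_b(n)). Then for all θ ∈ ℝ and k ≥ 2, |Σ_{n < b^k} g(n)e(nθ)| ≤ b^k · exp(−(k−1)‖(b−1)α‖² / (4b³)). -/

import Mathlib

/-- `e(t) = exp(2πit)`. -/
noncomputable def e (t : ℝ) : ℂ := Complex.exp (2 * Real.pi * Complex.I * t)

/-- Sum of base-`b` digits of `n`. -/
def digitSum (b n : ℕ) : ℕ := (Nat.digits b n).sum

/-- Distance from `x` to the nearest integer. -/
noncomputable def nint (x : ℝ) : ℝ := |x - round x|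

open Finset Real

lemma e_add (x y : ℝ) : e (x + y) = e x * e y := by
  rw [e, e, e, ← Complex.exp_add]
  push_cast
  ring_nf

lemma e_zero : e 0 = 1 := by simp [e]

lemma norm_e (x : ℝ) : ‖e x‖ = 1 := by
  rw [e, Complex.norm_exp]
  have : (2 * (Real.pi:ℂ) * Complex.I * x).re = 0 := by simp
  rw [this, Real.exp_zero]

lemma nint_nonneg (x : ℝ) : 0 ≤ nint x := abs_nonneg _

lemma nint_le (x : ℝ) (z : ℤ) : nint x ≤ |x - z| := round_le x z

lemma nint_le_half (x : ℝ) : nint x ≤ 1 / 2 := abs_sub_round x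

lemma nint_sub_le (x y : ℝ) : nint (x - y) ≤ nint x + nint y := by
  calc nint (x - y) ≤ |x - y - ((round x - round y : ℤ) : ℝ)| := nint_le _ _
    _ = |(x - round x) - (y - round y)| := by push_cast; ring_nf
    _ ≤ |x - round x| + |y - round y| := abs_sub _ _
    _ = nint x + nint y := rfl

lemma nint_nat_mul (n : ℕ) (x : ℝ) : nint (n * x) ≤ n * nint x := by
  calc nint (n * x) ≤ |n * x - ((n * round x : ℤ) : ℝ)| := nint_le _ _
    _ = (n : ℝ) * |x - round x| := by
        rw [show (n:ℝ) * x - ((n * round x : ℤ) : ℝ) = (n:ℝ) * (x - round x) by push_cast; ring,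
          abs_mul, Nat.abs_cast]
    _ = n * nint x := rfl

lemma cos_pi_mul_le {t : ℝ} (h0 : 0 ≤ t) (h1 : t ≤ 1 / 2) :
    Real.cos (Real.pi * t) ≤ 1 - 2 * t ^ 2 := by
  have hpi := Real.pi_pos
  have hs : 2 / Real.pi * (Real.pi * t / 2) ≤ Real.sin (Real.pi * t / 2) :=
    Real.mul_le_sin (by positivity) (by nlinarith)
  have hst : (2 / Real.pi) * (Real.pi * t / 2) = t := by field_simp
  rw [hst] at hs
  have hc : Real.cos (Real.pi * t) = 1 - 2 * Real.sin (Real.pi * t / 2) ^ 2 := by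
    have h1 := Real.cos_two_mul (Real.pi * t / 2)
    have h2 := Real.sin_sq_add_cos_sq (Real.pi * t / 2)
    have h3 : 2 * (Real.pi * t / 2) = Real.pi * t := by ring
    rw [h3] at h1
    linarith
  rw [hc]
  nlinarith

lemma abs_cos_eq (β : ℝ) : |Real.cos (Real.pi * β)| = Real.cos (Real.pi * nint β) := by
  have h1 : Real.pi * β = Real.pi * (β - round β) + round β * Real.pi := by ring
  rw [h1, Real.cos_add_int_mul_pi, abs_mul]
  have habs : |((-1 : ℝ)) ^ (round β)| = 1 := by
    rcases Int.even_or_odd (round β) with h | h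
    · rw [h.neg_one_zpow, abs_one]
    · rw [h.neg_one_zpow, abs_neg, abs_one]
  rw [habs, one_mul, ← Real.cos_abs,
    show |Real.pi * (β - round β)| = Real.pi * nint β by
      rw [abs_mul, abs_of_pos Real.pi_pos]; rfl]
  exact abs_of_nonneg (Real.cos_nonneg_of_mem_Icc ⟨by nlinarith [nint_nonneg β, Real.pi_pos],
    by nlinarith [nint_le_half β, Real.pi_pos]⟩)

lemma norm_one_add_e (β : ℝ) : ‖1 + e β‖ = 2 * |Real.cos (Real.pi * β)| := by
  have he : e β = Complex.exp ((2 * Real.pi * β : ℝ) * Complex.I) := by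
    rw [e]; congr 1; push_cast; ring
  have hre : (e β).re = Real.cos (2 * Real.pi * β) := by
    rw [he]; exact Complex.exp_ofReal_mul_I_re _
  have him : (e β).im = Real.sin (2 * Real.pi * β) := by
    rw [he]; exact Complex.exp_ofReal_mul_I_im _
  have hsq : ‖1 + e β‖ ^ 2 = (2 * |Real.cos (Real.pi * β)|) ^ 2 := by
    rw [Complex.sq_norm, Complex.normSq_apply, Complex.add_re,
      Complex.add_im, Complex.one_re, Complex.one_im, hre, him]
    have h2 : Real.cos (2 * Real.pi * β) = 2 * Real.cos (Real.pi * β) ^ 2 - 1 := by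
      rw [show 2 * Real.pi * β = 2 * (Real.pi * β) by ring, Real.cos_two_mul]
    have h3 := Real.sin_sq_add_cos_sq (2 * Real.pi * β)
    have h4 : |Real.cos (Real.pi * β)| ^ 2 = Real.cos (Real.pi * β) ^ 2 := sq_abs _
    nlinarith
  have h5 : (0:ℝ) ≤ ‖1 + e β‖ := norm_nonneg _
  have h6 : (0:ℝ) ≤ 2 * |Real.cos (Real.pi * β)| := by positivity
  nlinarith

lemma single_digit (b : ℕ) (hb : 2 ≤ b) (β : ℝ) :
    ‖∑ m ∈ Finset.range b, e (m * β)‖ ≤ b * Real.exp (-(nint β ^ 2 / b)) := by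
  have hsplit : ∑ m ∈ Finset.range b, e (m * β)
      = (∑ m ∈ Finset.range 2, e (m * β)) + ∑ m ∈ Finset.Ico 2 b, e (m * β) := by
    rw [Finset.range_eq_Ico, ← Finset.sum_Ico_consecutive _ (by omega : 0 ≤ 2) hb,
      Nat.Ico_zero_eq_range]
  have h2 : ∑ m ∈ Finset.range 2, e (m * β) = 1 + e β := by
    rw [Finset.sum_range_succ, Finset.sum_range_one]
    norm_num [e_zero]
  have hrest : ‖∑ m ∈ Finset.Ico 2 b, e (m * β)‖ ≤ (b : ℝ) - 2 := by
    calc ‖∑ m ∈ Finset.Ico 2 b, e (m * β)‖ ≤ ∑ m ∈ Finset.Ico 2 b, ‖e (m * β)‖ :=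
          norm_sum_le _ _
      _ = (b : ℝ) - 2 := by
          simp only [norm_e, Finset.sum_const, Nat.card_Ico, nsmul_eq_mul, mul_one]
          rw [Nat.cast_sub hb]
          norm_num
  have hmain : ‖∑ m ∈ Finset.range b, e (m * β)‖ ≤ (b : ℝ) - 4 * nint β ^ 2 := by
    rw [hsplit]
    calc ‖(∑ m ∈ Finset.range 2, e (m * β)) + ∑ m ∈ Finset.Ico 2 b, e (m * β)‖
        ≤ ‖∑ m ∈ Finset.range 2, e (m * β)‖ + ‖∑ m ∈ Finset.Ico 2 b, e (m * β)‖ :=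
          norm_add_le _ _
      _ ≤ (2 * |Real.cos (Real.pi * β)|) + ((b:ℝ) - 2) := by
          rw [h2, norm_one_add_e]; exact add_le_add le_rfl hrest
      _ ≤ (2 * (1 - 2 * nint β ^ 2)) + ((b:ℝ) - 2) := by
          have := cos_pi_mul_le (nint_nonneg β) (nint_le_half β)
          rw [abs_cos_eq]
          linarith
      _ = (b : ℝ) - 4 * nint β ^ 2 := by ring
  have hb0 : (0:ℝ) < b := by positivity
  have hexp : 1 - nint β ^ 2 / b ≤ Real.exp (-(nint β ^ 2 / b)) := by
    have := Real.add_one_le_exp (-(nint β ^ 2 / b))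
    linarith
  have hn := nint_nonneg β
  calc ‖∑ m ∈ Finset.range b, e (m * β)‖ ≤ (b : ℝ) - 4 * nint β ^ 2 := hmain
    _ ≤ (b : ℝ) * (1 - nint β ^ 2 / b) := by
        rw [mul_sub, mul_one, mul_div_cancel₀ _ (ne_of_gt hb0)]
        nlinarith
    _ ≤ b * Real.exp (-(nint β ^ 2 / b)) := by
        exact mul_le_mul_of_nonneg_left hexp hb0.le

lemma digitSum_add_base_mul (b : ℕ) (hb : 2 ≤ b) (r m : ℕ) (hr : r < b) :
    digitSum b (r + b * m) = r + digitSum b m := by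
  rcases Nat.eq_zero_or_pos (r + b * m) with h | h
  · have hr0 : r = 0 := by omega
    have hm0 : m = 0 := by
      by_contra hm
      have : 0 < b * m := Nat.mul_pos (by omega) (Nat.pos_of_ne_zero hm)
      omega
    simp [hr0, hm0, digitSum]
  · rw [digitSum, Nat.digits_def' (by omega : 1 < b) h]
    have h1 : (r + b * m) % b = r := by
      rw [Nat.add_mul_mod_self_left, Nat.mod_eq_of_lt hr]
    have h2 : (r + b * m) / b = m := by
      rw [Nat.add_mul_div_left _ _ (by omega : 0 < b), Nat.div_eq_of_lt hr]
      omega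
    rw [h1, h2, List.sum_cons]
    rfl

lemma factor (b : ℕ) (hb : 2 ≤ b) (α : ℝ) :
    ∀ (k : ℕ) (θ : ℝ),
      ∑ n ∈ Finset.range (b ^ k), e (α * digitSum b n) * e (n * θ)
        = ∏ i ∈ Finset.range k, ∑ m ∈ Finset.range b, e (m * (α + b ^ i * θ)) := by
  intro k
  induction k with
  | zero => intro θ; simp [digitSum, e_zero]
  | succ k ih =>
    intro θ
    have hre : ∑ n ∈ Finset.range (b ^ (k + 1)), e (α * digitSum b n) * e (n * θ)
        = ∑ p ∈ Finset.range b ×ˢ Finset.range (b ^ k),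
            e (α * digitSum b (p.1 + b * p.2)) * e ((p.1 + b * p.2 : ℕ) * θ) := by
      apply Finset.sum_nbij' (i := fun n => (n % b, n / b)) (j := fun p => p.1 + b * p.2)
      · intro n hn
        simp only [Finset.mem_range] at hn
        simp only [Finset.mem_product, Finset.mem_range]
        constructor
        · exact Nat.mod_lt _ (by omega)
        · rw [Nat.div_lt_iff_lt_mul (by omega : 0 < b)]
          calc n < b ^ (k+1) := hn
            _ = b ^ k * b := by rw [pow_succ]
      · intro p hp
        simp only [Finset.mem_product, Finset.mem_range] at hp
        simp only [Finset.mem_range]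
        calc p.1 + b * p.2 < b * (p.2 + 1) := by
              rw [Nat.mul_add, Nat.mul_one]; omega
          _ ≤ b * b ^ k := Nat.mul_le_mul_left _ (by omega)
          _ = b ^ (k + 1) := (pow_succ' b k).symm
      · intro n hn
        simp [Nat.mod_add_div]
      · intro p hp
        simp only [Finset.mem_product, Finset.mem_range] at hp
        have h1 : (p.1 + b * p.2) % b = p.1 := by
          rw [Nat.add_mul_mod_self_left, Nat.mod_eq_of_lt hp.1]
        have h2 : (p.1 + b * p.2) / b = p.2 := by
          rw [Nat.add_mul_div_left _ _ (by omega : 0 < b), Nat.div_eq_of_lt hp.1]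
          omega
        simp [h1, h2]
      · intro n hn
        simp [Nat.mod_add_div]
    rw [hre]
    rw [Finset.sum_product]
    have hterm : ∀ r ∈ Finset.range b, ∀ m ∈ Finset.range (b ^ k),
        e (α * digitSum b (r + b * m)) * e ((r + b * m : ℕ) * θ)
          = (e (r * (α + θ))) * (e (α * digitSum b m) * e (m * (b * θ))) := by
      intro r hr m hm
      simp only [Finset.mem_range] at hr
      rw [digitSum_add_base_mul b hb r m hr]
      push_cast
      rw [show α * (r + digitSum b m) = (r * (α)) + α * digitSum b m by ring,
        show ((r:ℝ) + b * m) * θ = r * θ + m * (b * θ) by ring,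
        e_add, e_add]
      rw [show (r:ℝ) * (α + θ) = r * α + r * θ by ring, e_add]
      ring
    rw [Finset.sum_congr rfl (fun r hr => Finset.sum_congr rfl (fun m hm => hterm r hr m hm))]
    have : ∑ r ∈ Finset.range b, ∑ m ∈ Finset.range (b ^ k),
        e (r * (α + θ)) * (e (α * digitSum b m) * e (m * (b * θ)))
        = (∑ r ∈ Finset.range b, e (r * (α + θ)))
          * ∑ m ∈ Finset.range (b ^ k), e (α * digitSum b m) * e (m * (b * θ)) := by
      rw [Finset.sum_mul_sum]
    rw [this, ih (b * θ)]
    have hprod : ∀ i m : ℕ, (m : ℝ) * (α + (b : ℝ) ^ i * ((b : ℝ) * θ))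
        = (m : ℝ) * (α + (b : ℝ) ^ (i + 1) * θ) := by
      intro i m
      rw [pow_succ]
      ring
    simp only [hprod]
    rw [Finset.prod_range_succ']
    simp only [pow_zero, one_mul]
    exact mul_comm _ _

lemma sum_sq_lower (b k : ℕ) (hb : 2 ≤ b) (hk : 2 ≤ k) (α θ : ℝ) :
    ((k : ℝ) - 1) * nint (((b : ℝ) - 1) * α) ^ 2 / (4 * (b : ℝ) ^ 2)
      ≤ ∑ i ∈ Finset.range k, nint (α + (b : ℝ) ^ i * θ) ^ 2 := by
  set c := nint (((b : ℝ) - 1) * α) with hc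
  set f : ℕ → ℝ := fun i => nint (α + (b : ℝ) ^ i * θ) with hfdef
  have hb0 : (0:ℝ) < b := by positivity
  have hkey : ∀ i, c ^ 2 ≤ 2 * (b : ℝ) ^ 2 * (f i ^ 2 + f (i + 1) ^ 2) := by
    intro i
    have hxy : (b : ℝ) * (α + (b : ℝ) ^ i * θ) - (α + (b : ℝ) ^ (i + 1) * θ)
        = ((b : ℝ) - 1) * α := by
      rw [pow_succ]; ring
    have h1 : c ≤ (b : ℝ) * f i + f (i + 1) := by
      calc c = nint ((b : ℝ) * (α + (b : ℝ) ^ i * θ) - (α + (b : ℝ) ^ (i + 1) * θ)) := by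
            rw [hxy]
        _ ≤ nint ((b : ℝ) * (α + (b : ℝ) ^ i * θ)) + nint (α + (b : ℝ) ^ (i + 1) * θ) :=
            nint_sub_le _ _
        _ ≤ (b : ℝ) * f i + f (i + 1) :=
            add_le_add (nint_nat_mul b (α + (b : ℝ) ^ i * θ)) le_rfl
    have hb1 : (1 : ℝ) ≤ (b : ℝ) := by exact_mod_cast (by omega : 1 ≤ b)
    have hfi := nint_nonneg (α + (b : ℝ) ^ i * θ)
    have hfi1 := nint_nonneg (α + (b : ℝ) ^ (i + 1) * θ)
    have h2 : c ≤ (b : ℝ) * (f i + f (i + 1)) := by nlinarith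
    have hc0 : 0 ≤ c := nint_nonneg _
    have h3 : c ^ 2 ≤ ((b : ℝ) * (f i + f (i + 1))) ^ 2 := by
      apply pow_le_pow_left₀ hc0 h2
    have h4 : ((b : ℝ) * (f i + f (i + 1))) ^ 2 ≤ 2 * (b : ℝ) ^ 2 * (f i ^ 2 + f (i + 1) ^ 2) := by
      nlinarith [mul_nonneg (sq_nonneg (b : ℝ)) (sq_nonneg (f i - f (i + 1)))]
    linarith
  have hcast : ((k - 1 : ℕ) : ℝ) = (k : ℝ) - 1 := by
    push_cast [Nat.cast_sub (by omega : 1 ≤ k)]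
    ring
  have hsum1 : ((k : ℝ) - 1) * c ^ 2
      ≤ 2 * (b : ℝ) ^ 2 * ∑ i ∈ Finset.range (k - 1), (f i ^ 2 + f (i + 1) ^ 2) := by
    calc ((k : ℝ) - 1) * c ^ 2 = ∑ _i ∈ Finset.range (k - 1), c ^ 2 := by
          rw [Finset.sum_const, Finset.card_range, nsmul_eq_mul, hcast]
      _ ≤ ∑ i ∈ Finset.range (k - 1), 2 * (b : ℝ) ^ 2 * (f i ^ 2 + f (i + 1) ^ 2) :=
          Finset.sum_le_sum (fun i _ => hkey i)
      _ = 2 * (b : ℝ) ^ 2 * ∑ i ∈ Finset.range (k - 1), (f i ^ 2 + f (i + 1) ^ 2) := by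
          rw [Finset.mul_sum]
  have hkk : k = (k - 1) + 1 := by omega
  have hsplit : ∑ i ∈ Finset.range k, f i ^ 2
      = (∑ i ∈ Finset.range (k - 1), f (i + 1) ^ 2) + f 0 ^ 2 := by
    conv_lhs => rw [hkk]
    exact Finset.sum_range_succ' _ _
  have hsub : ∑ i ∈ Finset.range (k - 1), f i ^ 2 ≤ ∑ i ∈ Finset.range k, f i ^ 2 :=
    Finset.sum_le_sum_of_subset_of_nonneg (Finset.range_subset_range.2 (by omega))
      (fun i _ _ => sq_nonneg _)
  have hsum2 : ∑ i ∈ Finset.range (k - 1), (f i ^ 2 + f (i + 1) ^ 2)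
      ≤ 2 * ∑ i ∈ Finset.range k, f i ^ 2 := by
    rw [Finset.sum_add_distrib]
    have h0 : (0:ℝ) ≤ f 0 ^ 2 := sq_nonneg _
    linarith [hsplit, hsub]
  rw [div_le_iff₀ (by positivity)]
  have h5 := mul_le_mul_of_nonneg_left hsum2 (by positivity : (0:ℝ) ≤ 2 * (b : ℝ) ^ 2)
  calc ((k : ℝ) - 1) * c ^ 2
      ≤ 2 * (b : ℝ) ^ 2 * ∑ i ∈ Finset.range (k - 1), (f i ^ 2 + f (i + 1) ^ 2) := hsum1
    _ ≤ 2 * (b : ℝ) ^ 2 * (2 * ∑ i ∈ Finset.range k, f i ^ 2) := h5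
    _ = (∑ i ∈ Finset.range k, f i ^ 2) * (4 * (b : ℝ) ^ 2) := by ring

/-- For `b ≥ 2`, `α ∈ ℝ`, `g(n) = e(α s_b(n))`, and any `θ ∈ ℝ`, `k ≥ 2`,
`|∑_{n < b^k} g(n)e(nθ)| ≤ b^k · exp(−(k−1)‖(b−1)α‖² / (4b³))`. -/
theorem digit_sum_fourier_Linf_bound (b k : ℕ) (hb : 2 ≤ b) (hk : 2 ≤ k)
    (α θ : ℝ) :
    ‖∑ n ∈ Finset.range (b ^ k), e (α * digitSum b n) * e (n * θ)‖ ≤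
      (b : ℝ) ^ k *
        Real.exp (-(((k : ℝ) - 1) * nint ((b - 1 : ℝ) * α) ^ 2 / (4 * (b : ℝ) ^ 3))) := by
  have hb0 : (0:ℝ) < b := by positivity
  set c := nint (((b : ℝ) - 1) * α) with hc
  set f : ℕ → ℝ := fun i => nint (α + (b : ℝ) ^ i * θ) with hfdef
  set S := ∑ i ∈ Finset.range k, f i ^ 2 with hS
  rw [factor b hb α k θ]
  have hnorm : ‖∏ i ∈ Finset.range k, ∑ m ∈ Finset.range b, e (m * (α + (b:ℝ) ^ i * θ))‖
      ≤ ∏ i ∈ Finset.range k, ((b : ℝ) * Real.exp (-(f i ^ 2 / b))) := by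
    rw [norm_prod]
    exact Finset.prod_le_prod (fun i _ => norm_nonneg _) (fun i _ => single_digit b hb _)
  have hprod : ∏ i ∈ Finset.range k, ((b : ℝ) * Real.exp (-(f i ^ 2 / b)))
      = (b : ℝ) ^ k * Real.exp (-(S / b)) := by
    rw [Finset.prod_mul_distrib, Finset.prod_const, Finset.card_range, ← Real.exp_sum]
    congr 2
    rw [hS, Finset.sum_div, ← Finset.sum_neg_distrib]
  have hlow := sum_sq_lower b k hb hk α θ
  have hexp : Real.exp (-(S / b)) ≤ Real.exp (-(((k : ℝ) - 1) * c ^ 2 / (4 * (b : ℝ) ^ 3))) := by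
    rw [Real.exp_le_exp, neg_le_neg_iff]
    calc ((k : ℝ) - 1) * c ^ 2 / (4 * (b : ℝ) ^ 3)
        = (((k : ℝ) - 1) * c ^ 2 / (4 * (b : ℝ) ^ 2)) / b := by
          rw [div_div]
          congr 1
          ring
      _ ≤ S / b := (div_le_div_iff_of_pos_right hb0).2 hlow
  calc ‖∏ i ∈ Finset.range k, ∑ m ∈ Finset.range b, e (m * (α + (b:ℝ) ^ i * θ))‖
      ≤ (b : ℝ) ^ k * Real.exp (-(S / b)) := by rw [← hprod]; exact hnorm
    _ ≤ (b : ℝ) ^ k * Real.exp (-(((k : ℝ) - 1) * c ^ 2 / (4 * (b : ℝ) ^ 3))) :=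
        mul_le_mul_of_nonneg_left hexp (by positivity)
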